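/- (Transition-time identity.) Under the discrete-time masked-diffusion setup, for every position i ∈ Fin n and every function F : (Fin n → Option V) → ℝ, E_Q[ F(z_{τ_i+1}(τ)) ] = Σ_{t=1}^{T−1} E_Q[ 1{z_{t+1}(τ)_i = none} · ((α(t) − α(t+1))/(1 − α(t+1))) · F(z_{t+1}(τ)) ]. In words: the expectation of any statistic of the context seen at token i's own unmasking step can be rewritten as a weighted sum over timesteps of expectations restricted to the event that token i is masked, with posterior weight (α(t) − α(t+1))/(1 − α(t+1)). -/

import Mathlib

open scoped Classical

/-- The partially masked sequence `z_s(τ)`: at time `s`, position `i` still shows the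
clean token `x i` if `s ≤ τ i`, and is masked (`none`) otherwise. -/
def maskedSeq {V : Type*} {n : ℕ} (x : Fin n → V) (τ : Fin n → ℕ) (s : ℕ) :
    Fin n → Option V :=
  fun i => if s ≤ τ i then some (x i) else none

/-- The forward-process probability of the masking-time vector `τ`:
`q_fwd(τ) = ∏ i, (α (τ i) − α (τ i + 1))`. -/
noncomputable def fwdProb {n : ℕ} (α : ℕ → ℝ) (τ : Fin n → ℕ) : ℝ :=
  ∏ i, (α (τ i) - α (τ i + 1))

/-- Expectation of `F` over masking-time vectors `τ ∈ {1, …, T−1}ⁿ` under the product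
measure `Q` with `P(τ i = t) = α t − α (t+1)`. -/
noncomputable def expQ {n : ℕ} (α : ℕ → ℝ) (T : ℕ) (F : (Fin n → ℕ) → ℝ) : ℝ :=
  ∑ τ ∈ Fintype.piFinset (fun _ : Fin n => Finset.Icc 1 (T - 1)), fwdProb α τ * F τ

private lemma telescope_aux (α : ℕ → ℝ) (t : ℕ) :
    ∑ s ∈ Finset.Icc 1 t, (α s - α (s + 1)) = α 1 - α (t + 1) := by
  induction t with
  | zero => simp
  | succ k ih =>
    rw [Finset.sum_Icc_succ_top (by omega : 1 ≤ k + 1), ih]; ring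

private lemma fwdProb_update_aux {n : ℕ} (α : ℕ → ℝ) (τ : Fin n → ℕ) (i : Fin n) (a : ℕ) :
    fwdProb α (Function.update τ i a) * (α (τ i) - α (τ i + 1))
      = fwdProb α τ * (α a - α (a + 1)) := by
  unfold fwdProb
  have e1 : (∏ j, (α (Function.update τ i a j) - α (Function.update τ i a j + 1)))
      = (∏ j ∈ Finset.univ.erase i, (α (τ j) - α (τ j + 1))) * (α a - α (a + 1)) := by
    rw [← Finset.prod_erase_mul Finset.univ
        (fun j => α (Function.update τ i a j) - α (Function.update τ i a j + 1))
        (Finset.mem_univ i)]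
    rw [Function.update_self]
    congr 1
    refine Finset.prod_congr rfl fun j hj => ?_
    rw [Function.update_of_ne (Finset.ne_of_mem_erase hj)]
  have e2 : (∏ j, (α (τ j) - α (τ j + 1)))
      = (∏ j ∈ Finset.univ.erase i, (α (τ j) - α (τ j + 1))) * (α (τ i) - α (τ i + 1)) :=
    (Finset.prod_erase_mul Finset.univ _ (Finset.mem_univ i)).symm
  rw [e1, e2]
  ring

private lemma fiber_switch_aux {n : ℕ} (α : ℕ → ℝ) (T : ℕ) (i : Fin n)
    (s t : ℕ) (hs : s ∈ Finset.Icc 1 (T - 1)) (ht : t ∈ Finset.Icc 1 (T - 1))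
    (G : (Fin n → ℕ) → ℝ)
    (hG : ∀ τ : Fin n → ℕ, τ i = s → G (Function.update τ i t) = G τ) :
    ∑ τ ∈ (Fintype.piFinset fun _ : Fin n => Finset.Icc 1 (T - 1)).filter
        (fun τ => τ i = s), fwdProb α τ * G τ * (α t - α (t + 1))
    = ∑ τ ∈ (Fintype.piFinset fun _ : Fin n => Finset.Icc 1 (T - 1)).filter
        (fun τ => τ i = t), fwdProb α τ * G τ * (α s - α (s + 1)) := by
  refine Finset.sum_nbij' (fun τ => Function.update τ i t)
    (fun τ => Function.update τ i s) ?_ ?_ ?_ ?_ ?_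
  · intro τ hτ
    (try dsimp only)
    (try dsimp only)
    rw [Finset.mem_filter] at hτ ⊢
    refine ⟨?_, Function.update_self _ _ _⟩
    rw [Fintype.mem_piFinset] at hτ ⊢
    intro j
    rcases eq_or_ne j i with rfl | hne
    · rw [Function.update_self]; exact ht
    · rw [Function.update_of_ne hne]; exact hτ.1 j
  · intro τ hτ
    (try dsimp only)
    rw [Finset.mem_filter] at hτ ⊢
    refine ⟨?_, Function.update_self _ _ _⟩
    rw [Fintype.mem_piFinset] at hτ ⊢
    intro j
    rcases eq_or_ne j i with rfl | hne
    · rw [Function.update_self]; exact hs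
    · rw [Function.update_of_ne hne]; exact hτ.1 j
  · intro τ hτ
    (try dsimp only)
    rw [Finset.mem_filter] at hτ
    rw [Function.update_idem, ← hτ.2, Function.update_eq_self]
  · intro τ hτ
    (try dsimp only)
    rw [Finset.mem_filter] at hτ
    rw [Function.update_idem, ← hτ.2, Function.update_eq_self]
  · intro τ hτ
    (try dsimp only)
    rw [Finset.mem_filter] at hτ
    have h1 := fwdProb_update_aux α τ i t
    rw [hτ.2] at h1
    rw [hG τ hτ.2]
    linear_combination (-G τ) * h1

/-- **Transition-time identity.** The expectation of any statistic of the context seen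
at token `i`'s own unmasking step equals a weighted sum over timesteps of expectations
restricted to the event that token `i` is masked, with posterior weight
`(α t − α (t+1)) / (1 − α (t+1))`. -/
theorem masked_diffusion_transition_time_identity
    {V : Type*} [Fintype V] [Nonempty V] {n : ℕ} (hn : 1 ≤ n) (x : Fin n → V)
    {T : ℕ} (hT : 2 ≤ T) (α : ℕ → ℝ)
    (hα : StrictAntiOn α (Set.Icc 1 T)) (hα1 : α 1 = 1) (hαT : α T = 0)
    (i : Fin n) (F : (Fin n → Option V) → ℝ) :
    expQ α T (fun τ => F (maskedSeq x τ (τ i + 1))) =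
      ∑ t ∈ Finset.Icc 1 (T - 1),
        expQ α T (fun τ =>
          (if maskedSeq x τ (t + 1) i = none then (1 : ℝ) else 0) *
            ((α t - α (t + 1)) / (1 - α (t + 1))) * F (maskedSeq x τ (t + 1))) := by
  classical
  set A := Fintype.piFinset (fun _ : Fin n => Finset.Icc 1 (T - 1)) with hA
  -- LHS as a fiberwise sum over the value of τ i
  have hmaps : ∀ τ ∈ A, τ i ∈ Finset.Icc 1 (T - 1) := by
    intro τ hτ
    rw [hA, Fintype.mem_piFinset] at hτ
    exact hτ i
  have hLHS : expQ α T (fun τ => F (maskedSeq x τ (τ i + 1)))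
      = ∑ t ∈ Finset.Icc 1 (T - 1), ∑ τ ∈ A.filter (fun τ => τ i = t),
          fwdProb α τ * F (maskedSeq x τ (t + 1)) := by
    unfold expQ
    rw [← Finset.sum_fiberwise_of_maps_to hmaps
        (fun τ => fwdProb α τ * F (maskedSeq x τ (τ i + 1)))]
    refine Finset.sum_congr rfl fun t ht => Finset.sum_congr rfl fun τ hτ => ?_
    rw [Finset.mem_filter] at hτ
    rw [hτ.2]
  rw [hLHS]
  refine Finset.sum_congr rfl fun t ht => ?_
  rw [Finset.mem_Icc] at ht
  -- basic positivity facts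
  have htT : t ∈ Set.Icc 1 T := ⟨ht.1, by omega⟩
  have ht1T : t + 1 ∈ Set.Icc 1 T := ⟨by omega, by omega⟩
  have h1T : (1 : ℕ) ∈ Set.Icc 1 T := ⟨le_refl _, by omega⟩
  have hpos : 0 < α t - α (t + 1) := by
    have := hα htT ht1T (by omega)
    linarith
  have hone : 0 < 1 - α (t + 1) := by
    have h2 := hα h1T ht1T (by omega)
    rw [hα1] at h2
    linarith
  -- indicator characterization
  have hind : ∀ τ : Fin n → ℕ,
      (maskedSeq x τ (t + 1) i = none) = (τ i ≤ t) := by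
    intro τ
    simp only [maskedSeq]
    by_cases h : t + 1 ≤ τ i
    · simp [h]; omega
    · simp [h]; omega
  set w : ℝ := (α t - α (t + 1)) / (1 - α (t + 1)) with hw
  set G : (Fin n → ℕ) → ℝ := fun τ => F (maskedSeq x τ (t + 1)) with hG
  -- rewrite the RHS expectation as a sum over the event τ i ≤ t
  have hstep1 : expQ α T (fun τ =>
      (if maskedSeq x τ (t + 1) i = none then (1 : ℝ) else 0) * w * G τ)
      = ∑ τ ∈ A.filter (fun τ => τ i ≤ t), fwdProb α τ * (w * G τ) := by
    unfold expQ
    rw [Finset.sum_filter]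
    refine Finset.sum_congr rfl fun τ hτ => ?_
    simp only [hind]
    by_cases hc : τ i ≤ t <;> simp [hc] <;> ring
  rw [hstep1]
  -- split the event τ i ≤ t into fibers τ i = s, s ∈ Icc 1 t
  have hmaps2 : ∀ τ ∈ A.filter (fun τ => τ i ≤ t), τ i ∈ Finset.Icc 1 t := by
    intro τ hτ
    rw [Finset.mem_filter] at hτ
    have := hmaps τ hτ.1
    rw [Finset.mem_Icc] at this ⊢
    exact ⟨this.1, hτ.2⟩
  rw [← Finset.sum_fiberwise_of_maps_to hmaps2 (fun τ => fwdProb α τ * (w * G τ))]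
  have hfib : ∀ s ∈ Finset.Icc 1 t,
      (A.filter (fun τ => τ i ≤ t)).filter (fun τ => τ i = s)
        = A.filter (fun τ => τ i = s) := by
    intro s hs
    rw [Finset.mem_Icc] at hs
    ext τ
    simp only [Finset.mem_filter]
    constructor
    · rintro ⟨⟨h1, _⟩, h3⟩; exact ⟨h1, h3⟩
    · rintro ⟨h1, h3⟩; exact ⟨⟨h1, by omega⟩, h3⟩
  -- each fiber sum relates to the fiber at t
  set St : ℝ := ∑ τ ∈ A.filter (fun τ => τ i = t), fwdProb α τ * G τ with hSt
  have hfibval : ∀ s ∈ Finset.Icc 1 t,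
      ∑ τ ∈ A.filter (fun τ => τ i = s), fwdProb α τ * G τ
        = St * (α s - α (s + 1)) / (α t - α (t + 1)) := by
    intro s hs
    rw [Finset.mem_Icc] at hs
    have hsmem : s ∈ Finset.Icc 1 (T - 1) := by
      rw [Finset.mem_Icc]; omega
    have htmem : t ∈ Finset.Icc 1 (T - 1) := by
      rw [Finset.mem_Icc]; omega
    have hGi : ∀ τ : Fin n → ℕ, τ i = s →
        G (Function.update τ i t) = G τ := by
      intro τ hτi
      simp only [hG]
      congr 1
      funext j
      simp only [maskedSeq]
      rcases eq_or_ne j i with rfl | hne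
      · rw [Function.update_self, hτi]
        have h1 : ¬ (t + 1 ≤ t) := by omega
        have h2 : ¬ (t + 1 ≤ s) := by omega
        rw [if_neg h1, if_neg h2]
      · rw [Function.update_of_ne hne]
    have hkey := fiber_switch_aux α T i s t hsmem htmem G hGi
    rw [← Finset.sum_mul, ← Finset.sum_mul] at hkey
    rw [hSt]
    field_simp
    linarith [hkey]
  rw [Finset.sum_congr rfl fun s hs => by
    rw [hfib s hs,
      show (∑ τ ∈ A.filter (fun τ => τ i = s), fwdProb α τ * (w * G τ))
        = w * ∑ τ ∈ A.filter (fun τ => τ i = s), fwdProb α τ * G τ by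
        rw [Finset.mul_sum]; exact Finset.sum_congr rfl fun τ _ => by ring,
      hfibval s hs]]
  rw [← Finset.mul_sum, ← Finset.sum_div, ← Finset.mul_sum, telescope_aux, hα1]
  rw [hw]
  field_simp
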